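/- Let γ, η, ζ, β, ξ, K > 0 with γ > (ηβ)^{1/2}, and let Ī > 0. Set h = η + ζĪ, φ = ζĪ/(η+ζĪ), σ̄² = (β/h)^{1/2}, and S̄ = K(γ − (1/K + ηζ/(η+ζĪ) + ξ)Ī − (βh)^{1/2}). Assume S̄ > 0. Then the Gaussian s̄(x) = S̄(2πσ̄²)^{−1/2} exp(−(x−φ)²/(2σ̄²)) satisfies β s̄''(x) + (γ − ηx² − (ξ + ζ(1−x)² + 1/K)Ī − S̄/K) s̄(x) = 0 for all x ∈ ℝ. -/

import Mathlib

open Real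

theorem stmt_13 (γ η ζ β ξ K Ibar : ℝ) (hγ : 0 < γ) (hη : 0 < η) (hζ : 0 < ζ)
    (hβ : 0 < β) (hξ : 0 < ξ) (hK : 0 < K)
    (hcond : Real.sqrt (η * β) < γ) (hI : 0 < Ibar)
    (h φ σ2 S : ℝ)
    (hh : h = η + ζ * Ibar) (hφ : φ = ζ * Ibar / (η + ζ * Ibar))
    (hσ2 : σ2 = Real.sqrt (β / h))
    (hS : S = K * (γ - (1 / K + η * ζ / (η + ζ * Ibar) + ξ) * Ibar - Real.sqrt (β * h)))
    (hSpos : 0 < S)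
    (s : ℝ → ℝ)
    (hs : s = fun x => S * (2 * π * σ2) ^ (-(1 : ℝ) / 2) * Real.exp (-(x - φ) ^ 2 / (2 * σ2))) :
    ∀ x : ℝ,
      β * deriv (deriv s) x
        + (γ - η * x ^ 2 - (ξ + ζ * (1 - x) ^ 2 + 1 / K) * Ibar - S / K) * s x = 0 := by
  have hhpos : 0 < h := by rw [hh]; positivity
  have hσpos : 0 < σ2 := by
    rw [hσ2]; exact Real.sqrt_pos.2 (div_pos hβ hhpos)
  have hσne : σ2 ≠ 0 := ne_of_gt hσpos
  have hσsq : σ2 ^ 2 = β / h := by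
    rw [hσ2, sq_sqrt (le_of_lt (div_pos hβ hhpos))]
  have hsqrt : Real.sqrt (β * h) * σ2 = β := by
    rw [hσ2, ← Real.sqrt_mul (by positivity)]
    rw [show β * h * (β / h) = β ^ 2 by field_simp]
    exact Real.sqrt_sq hβ.le
  set A : ℝ := S * (2 * π * σ2) ^ (-(1 : ℝ) / 2) with hA
  have hinner : ∀ x : ℝ, HasDerivAt (fun y : ℝ => -(y - φ) ^ 2 / (2 * σ2))
      (-(x - φ) / σ2) x := by
    intro x
    have h0 : HasDerivAt (fun y : ℝ => (y - φ) ^ 2) (2 * (x - φ)) x := by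
      simpa using ((hasDerivAt_id x).sub_const φ).fun_pow 2
    have := (h0.neg).div_const (2 * σ2)
    refine this.congr_deriv ?_
    field_simp
  -- first derivative
  have hd1 : ∀ x : ℝ, HasDerivAt s
      (A * (Real.exp (-(x - φ) ^ 2 / (2 * σ2)) * (-(x - φ) / σ2))) x := by
    intro x
    rw [hs]
    exact ((hinner x).exp).const_mul A
  have hderiv1 : deriv s = fun x => A * (Real.exp (-(x - φ) ^ 2 / (2 * σ2)) * (-(x - φ) / σ2)) := by
    funext x; exact (hd1 x).deriv
  -- second derivative
  have hd2 : ∀ x : ℝ, HasDerivAt (deriv s)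
      (A * Real.exp (-(x - φ) ^ 2 / (2 * σ2)) * ((x - φ) ^ 2 / σ2 ^ 2 - 1 / σ2)) x := by
    intro x
    have he : HasDerivAt (fun y : ℝ => Real.exp (-(y - φ) ^ 2 / (2 * σ2)))
        (Real.exp (-(x - φ) ^ 2 / (2 * σ2)) * (-(x - φ) / σ2)) x := (hinner x).exp
    have hl : HasDerivAt (fun y : ℝ => -(y - φ) / σ2) (-1 / σ2) x :=
      (((hasDerivAt_id x).sub_const φ).neg).div_const σ2
    have hprod := (he.mul hl).const_mul A
    rw [hderiv1]
    refine hprod.congr_deriv ?_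
    field_simp
    ring
  intro x
  set E : ℝ := Real.exp (-(x - φ) ^ 2 / (2 * σ2)) with hE
  have hsx : s x = A * E := by rw [hs]
  have hdd : deriv (deriv s) x = A * E * ((x - φ) ^ 2 / σ2 ^ 2 - 1 / σ2) := (hd2 x).deriv
  have hβσ2 : β / σ2 ^ 2 = h := by rw [hσsq]; field_simp
  have hβσ : β / σ2 = Real.sqrt (β * h) := by
    rw [div_eq_iff hσne]; exact hsqrt.symm
  have hcoeff : γ - η * x ^ 2 - (ξ + ζ * (1 - x) ^ 2 + 1 / K) * Ibar - S / K
      = Real.sqrt (β * h) - h * (x - φ) ^ 2 := by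
    set R : ℝ := Real.sqrt (β * h) with hR
    rw [hS, hφ, hh]
    have hden : (η + ζ * Ibar) ≠ 0 := by positivity
    field_simp
    ring
  have key : β * ((x - φ) ^ 2 / σ2 ^ 2 - 1 / σ2)
      + (γ - η * x ^ 2 - (ξ + ζ * (1 - x) ^ 2 + 1 / K) * Ibar - S / K) = 0 := by
    rw [hcoeff]
    have h1 : β * ((x - φ) ^ 2 / σ2 ^ 2) = h * (x - φ) ^ 2 := by
      rw [show β * ((x - φ) ^ 2 / σ2 ^ 2) = β / σ2 ^ 2 * (x - φ) ^ 2 by ring, hβσ2]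
    have h2' : β * (1 / σ2) = Real.sqrt (β * h) := by
      rw [show β * (1 / σ2) = β / σ2 by ring, hβσ]
    rw [mul_sub]
    linarith
  rw [hdd, hsx]
  linear_combination (A * E) * key
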